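/- Let T' = #·T·$ with sentinels #, $ ∉ Σ. For every nonempty string W over Σ occurring at least twice in T', there exist (possibly empty) strings U and V such that UWV is a maximal repeat of T' and the number of occurrences of UWV in T' equals the number of occurrences of W in T'. -/

import Mathlib

/-- Number of (factor) occurrences of `W` in `T`: the number of starting
positions `i` such that `W` is a prefix of `T.drop i`. -/
def occ {α : Type*} [DecidableEq α] (T W : List α) : ℕ :=
  (List.range (T.length + 1)).countP fun i => decide (W <+: T.drop i)

/-- `W` is right-maximal in `T`: at least two distinct right extensions occur. -/
def rightMax {α : Type*} (T W : List α) : Prop :=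
  ∃ b c, b ≠ c ∧ (W ++ [b]) <:+: T ∧ (W ++ [c]) <:+: T

/-- `W` is left-maximal in `T`: at least two distinct left extensions occur. -/
def leftMax {α : Type*} (T W : List α) : Prop :=
  ∃ a c, a ≠ c ∧ (a :: W) <:+: T ∧ (c :: W) <:+: T

open List
set_option linter.unusedSectionVars false

section Helpers

variable {α : Type*} [DecidableEq α]

lemma prefix_cons2 {α : Type*} {a : α} {X l : List α} (h : X <+: l) :
    (a :: X) <+: (a :: l) := by
  obtain ⟨t, ht⟩ := h
  exact ⟨t, by rw [List.cons_append, ht]⟩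

lemma drop_succ' (s : List α) (i : ℕ) : s.drop (i+1) = (s.drop i).drop 1 :=
  by rw [List.drop_drop]

lemma exists_two_of_two_le_countP {p : ℕ → Bool} {l : List ℕ} (hl : l.Nodup)
    (h : 2 ≤ l.countP p) :
    ∃ a b, a ∈ l ∧ b ∈ l ∧ a ≠ b ∧ p a ∧ p b := by
  rw [countP_eq_length_filter] at h
  obtain ⟨a, b, rest, hf⟩ : ∃ a b rest, l.filter p = a :: b :: rest := by
    match hfp : l.filter p with
    | [] => rw [hfp] at h; simp at h
    | [x] => rw [hfp] at h; simp at h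
    | a :: b :: r => exact ⟨a, b, r, rfl⟩
  have hnd := hl.filter p
  rw [hf] at hnd
  have hab : a ≠ b := by
    intro hE; subst hE; simp at hnd
  have ha : a ∈ l.filter p := by rw [hf]; simp
  have hb : b ∈ l.filter p := by rw [hf]; simp
  exact ⟨a, b, (mem_filter.mp ha).1, (mem_filter.mp hb).1, hab,
    (mem_filter.mp ha).2, (mem_filter.mp hb).2⟩

lemma occur_infix {s X : List α} {i : ℕ} (h : X <+: s.drop i) : X <:+: s :=
  h.isInfix.trans (s.drop_suffix i).isInfix

lemma infix_occur {s X : List α} (h : X <:+: s) :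
    ∃ i, i ∈ List.range (s.length + 1) ∧ X <+: s.drop i := by
  obtain ⟨u, v, huv⟩ := h
  refine ⟨u.length, ?_, ?_⟩
  · have : u.length ≤ s.length := by
      rw [← huv]; simp
    simp [mem_range]; omega
  · rw [← huv, List.append_assoc, List.drop_left]
    exact ⟨v, by simp⟩

lemma occ_pos_of_infix {s X : List α} (h : X <:+: s) : 1 ≤ occ s X := by
  obtain ⟨i, hi, hp⟩ := infix_occur h
  unfold occ
  rw [countP_eq_length_filter]
  have : i ∈ (List.range (s.length + 1)).filter fun i => decide (X <+: s.drop i) := by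
    rw [mem_filter]; exact ⟨hi, by simpa using hp⟩
  have := List.length_pos_of_mem this
  omega

lemma two_le_count {s X : List α} {c : α}
    (hc : c ∈ X) {i j : ℕ} (hij : i < j)
    (hi : X <+: s.drop i) (hj : X <+: s.drop j) : 2 ≤ s.count c := by
  obtain ⟨p, q, hX⟩ := List.append_of_mem hc
  subst hX
  obtain ⟨ti, hti⟩ := hi
  obtain ⟨tj, htj⟩ := hj
  have hcomb : ∀ m : ℕ, List.drop p.length (s.drop m) = s.drop (m + p.length) :=
    fun m => List.drop_drop
  have hdi : s.drop (i + p.length) = c :: (q ++ ti) := by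
    rw [← hcomb, ← hti, List.append_assoc, List.drop_left, List.cons_append]
  have hdj : s.drop (j + p.length) = c :: (q ++ tj) := by
    rw [← hcomb, ← htj, List.append_assoc, List.drop_left, List.cons_append]
  set a := i + p.length with ha
  set b := j + p.length with hb
  have hab : a < b := by omega
  have h1 : 1 ≤ count c (s.drop b) := by rw [hdj]; simp
  have h2 : 1 ≤ count c (s.take b) := by
    have hdt : (s.take b).drop a = (s.drop a).take (b - a) := by
      rw [List.drop_take]
    have hmem1 : c ∈ (s.take b).drop a := by
      rw [hdt, hdi]
      obtain ⟨k, hk⟩ : ∃ k, b - a = k + 1 := ⟨b - a - 1, by omega⟩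
      rw [hk, List.take_succ_cons]
      simp
    have hmem2 : c ∈ s.take b := List.mem_of_mem_drop hmem1
    have := List.count_pos_iff.mpr hmem2
    omega
  have : count c (s.take b) + count c (s.drop b) = count c s := by
    rw [← count_append, take_append_drop]
  omega

lemma occ_le_one {s X : List α} {c : α}
    (hc : c ∈ X) (hcount : s.count c ≤ 1) : occ s X ≤ 1 := by
  by_contra h
  push_neg at h
  obtain ⟨a, b, _, _, hab, ha, hb⟩ :=
    exists_two_of_two_le_countP nodup_range (show 2 ≤ occ s X from h)
  rw [decide_eq_true_eq] at ha hb
  rcases Nat.lt_or_ge a b with hlt | hge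
  · have := two_le_count hc hlt ha hb
    omega
  · have hlt : b < a := by omega
    have := two_le_count hc hlt hb ha
    omega

lemma exists_occur_of_two_le {s X : List α} (h : 2 ≤ occ s X) :
    ∃ i, X <+: s.drop i := by
  obtain ⟨a, b, _, _, _, ha, _⟩ :=
    exists_two_of_two_le_countP nodup_range h
  rw [decide_eq_true_eq] at ha
  exact ⟨a, ha⟩

end Helpers

section Main

variable {α : Type*} [DecidableEq α]
variable {s : List α} {hash dol : α}

/-- every occurrence of `X` (with `2 ≤ occ`) has a char after it. -/
lemma occur_next (hsd : ∃ y, s = y ++ [dol]) (hcnt : s.count dol ≤ 1)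
    {X : List α} (hX : X ≠ [])
    (hocc : 2 ≤ occ s X) {i : ℕ} (hi : X <+: s.drop i) :
    i + X.length < s.length := by
  have hlen : X.length ≤ s.length - i := by
    have := hi.length_le; simpa using this
  have hXpos : 1 ≤ X.length := by
    cases X with | nil => exact absurd rfl hX | cons x xs => simp
  have hipos : i < s.length := by omega
  by_contra hcon
  push_neg at hcon
  have heq : X = s.drop i := hi.eq_of_length (by simp; omega)
  have hdolX : dol ∈ X := by
    obtain ⟨X', x, hX'⟩ : ∃ l' a, X = l' ++ [a] := by
      rcases List.eq_nil_or_concat X with h'|⟨l',a,h'⟩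
      · exact absurd h' hX
      · exact ⟨l', a, by rw [h']; simp⟩
    obtain ⟨u, hu⟩ : X <:+ s := heq ▸ s.drop_suffix i
    obtain ⟨y, hy⟩ := hsd
    have hconc : (u ++ X') ++ [x] = y ++ [dol] := by
      rw [List.append_assoc, ← hX', hu, hy]
    have := (List.append_inj' hconc rfl).2
    simp only [List.cons.injEq] at this
    rw [hX', this.1]
    simp
  have := occ_le_one hdolX hcnt
  omega

/-- right extension step. -/
lemma step_right (hsd : ∃ y, s = y ++ [dol]) (hcnt : s.count dol ≤ 1)
    {X : List α} (hX : X ≠ [])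
    (hocc : 2 ≤ occ s X) (hnrm : ¬ rightMax s X) :
    ∃ b, X.length < s.length ∧ occ s (X ++ [b]) = occ s X := by
  obtain ⟨i0, hi0⟩ := exists_occur_of_two_le hocc
  have hnext0 := occur_next hsd hcnt hX hocc hi0
  obtain ⟨t0, ht0⟩ := hi0
  have hdroplen : (s.drop i0).length = s.length - i0 := by simp
  have ht0ne : t0 ≠ [] := by
    intro h
    rw [h, List.append_nil] at ht0
    have : X.length = (s.drop i0).length := by rw [ht0]
    omega
  obtain ⟨b, t0', rfl⟩ : ∃ b t0', t0 = b :: t0' := by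
    cases t0 with | nil => exact absurd rfl ht0ne | cons b t => exact ⟨b, t, rfl⟩
  have hXb : (X ++ [b]) <+: s.drop i0 := ⟨t0', by rw [← ht0]; simp⟩
  have hXbinf : (X ++ [b]) <:+: s := occur_infix hXb
  have hfollow : ∀ i, X <+: s.drop i → (X ++ [b]) <+: s.drop i := by
    intro i hi
    have hnext := occur_next hsd hcnt hX hocc hi
    obtain ⟨t, ht⟩ := hi
    have hdl : (s.drop i).length = s.length - i := by simp
    have htne : t ≠ [] := by
      intro h
      rw [h, List.append_nil] at ht
      have : X.length = (s.drop i).length := by rw [ht]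
      omega
    obtain ⟨c, t', rfl⟩ : ∃ c t', t = c :: t' := by
      cases t with | nil => exact absurd rfl htne | cons c t => exact ⟨c, t, rfl⟩
    have hXc : (X ++ [c]) <+: s.drop i := ⟨t', by rw [← ht]; simp⟩
    have hbc : b = c := by
      by_contra hbc
      exact hnrm ⟨b, c, hbc, hXbinf, occur_infix hXc⟩
    subst hbc
    exact hXc
  refine ⟨b, by omega, ?_⟩
  unfold occ
  apply List.countP_congr
  intro i _
  simp only [decide_eq_true_eq]
  constructor
  · intro h; exact (X.prefix_append [b]).trans h
  · intro h; exact hfollow i h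

/-- Right extension: recursion. -/
lemma extend_right (hsd : ∃ y, s = y ++ [dol]) (hcnt : s.count dol ≤ 1) :
    ∀ (k : ℕ) (X : List α), s.length - X.length ≤ k → X ≠ [] →
      2 ≤ occ s X →
      ∃ V, rightMax s (X ++ V) ∧ occ s (X ++ V) = occ s X := by
  intro k
  induction k with
  | zero =>
    intro X hk hX hocc
    by_cases hrm : rightMax s X
    · exact ⟨[], by simpa using hrm, by simp⟩
    · obtain ⟨b, hlen, _⟩ := step_right hsd hcnt hX hocc hrm
      omega
  | succ k ih =>
    intro X hk hX hocc
    by_cases hrm : rightMax s X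
    · exact ⟨[], by simpa using hrm, by simp⟩
    · obtain ⟨b, hlen, heq⟩ := step_right hsd hcnt hX hocc hrm
      obtain ⟨V', hrm', heq'⟩ := ih (X ++ [b]) (by simp; omega) (by simp)
        (by rw [heq]; exact hocc)
      refine ⟨b :: V', ?_, ?_⟩
      · have h2 : X ++ b :: V' = (X ++ [b]) ++ V' := by simp
        rw [h2]; exact hrm'
      · have h2 : X ++ b :: V' = (X ++ [b]) ++ V' := by simp
        rw [h2, heq', heq]

/-- every occurrence of X (2 ≤ occ) has i ≥ 1. -/
lemma occur_pos (hsh : ∃ y, s = hash :: y) (hcnt : s.count hash ≤ 1)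
    {X : List α} (hX : X ≠ [])
    (hocc : 2 ≤ occ s X) {i : ℕ} (hi : X <+: s.drop i) : 1 ≤ i := by
  by_contra h
  push_neg at h
  interval_cases i
  simp only [List.drop_zero] at hi
  obtain ⟨x, X', rfl⟩ : ∃ x X', X = x :: X' := by
    cases X with | nil => exact absurd rfl hX | cons x xs => exact ⟨x, xs, rfl⟩
  obtain ⟨t, ht⟩ := hi
  obtain ⟨y, hy⟩ := hsh
  have hx : x = hash := by
    rw [hy] at ht
    have := congrArg (fun l => l.head?) ht
    simpa using this
  have hmem : hash ∈ x :: X' := by rw [hx]; simp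
  have := occ_le_one hmem hcnt
  omega

/-- left extension step. -/
lemma step_left (hsh : ∃ y, s = hash :: y) (hcnt : s.count hash ≤ 1)
    {X : List α} (hX : X ≠ [])
    (hocc : 2 ≤ occ s X) (hnlm : ¬ leftMax s X) :
    ∃ a, occ s (a :: X) = occ s X ∧
      (rightMax s X → rightMax s (a :: X)) := by
  obtain ⟨i0, hi0⟩ := exists_occur_of_two_le hocc
  have hpos0 := occur_pos hsh hcnt hX hocc hi0
  have hilt : ∀ i, X <+: s.drop i → i < s.length := by
    intro i hi
    by_contra h
    push_neg at h
    rw [List.drop_eq_nil_of_le h, List.prefix_nil] at hi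
    exact hX hi
  have hdropeq : ∀ i, 1 ≤ i → i < s.length →
      ∃ c, s.drop (i - 1) = c :: s.drop i := by
    intro i h1 h2
    have hlen : (s.drop (i-1)).length = s.length - (i - 1) := by simp
    obtain ⟨c, t, hct⟩ : ∃ c t, s.drop (i-1) = c :: t := by
      cases hD : s.drop (i-1) with
      | nil => rw [hD] at hlen; simp at hlen; omega
      | cons c t => exact ⟨c, t, rfl⟩
    refine ⟨c, ?_⟩
    have h3 : s.drop i = (s.drop (i-1)).drop 1 := by
      rw [List.drop_drop]; congr 1; omega
    rw [hct, h3, hct]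
    simp
  obtain ⟨a, ha⟩ := hdropeq i0 hpos0 (hilt i0 hi0)
  have haX : (a :: X) <+: s.drop (i0 - 1) := by
    rw [ha]; exact prefix_cons2 hi0
  have haXinf : (a :: X) <:+: s := occur_infix haX
  have hprec : ∀ i, X <+: s.drop i → 1 ≤ i ∧ (a :: X) <+: s.drop (i - 1) ∧
      s.drop (i - 1) = a :: s.drop i := by
    intro i hi
    have hp := occur_pos hsh hcnt hX hocc hi
    obtain ⟨c, hc⟩ := hdropeq i hp (hilt i hi)
    have hcX : (c :: X) <+: s.drop (i - 1) := by rw [hc]; exact prefix_cons2 hi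
    have hca : c = a := by
      by_contra hca
      exact hnlm ⟨c, a, hca, occur_infix hcX, haXinf⟩
    subst hca
    exact ⟨hp, hcX, hc⟩
  refine ⟨a, ?_, ?_⟩
  · -- occ equality
    unfold occ
    have e1 : (List.range (s.length+1)).countP (fun i => decide ((a :: X) <+: s.drop i))
        = (List.range s.length).countP (fun i => decide ((a :: X) <+: s.drop i)) := by
      rw [List.range_succ, List.countP_append]
      have h0 : ¬ ((a :: X) <+: s.drop s.length) := by
        rw [List.drop_eq_nil_of_le (le_refl s.length), List.prefix_nil]
        simp
      simp [h0]
    have e2 : (List.range (s.length+1)).countP (fun i => decide (X <+: s.drop i))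
        = (List.range s.length).countP (fun i => decide (X <+: s.drop (i+1))) := by
      rw [List.range_succ_eq_map, List.countP_cons, List.countP_map]
      have h0 : ¬ (X <+: s.drop 0) := by
        intro h
        have := (hprec 0 h).1
        omega
      simp only [h0, decide_false, Function.comp_def, Nat.succ_eq_add_one]
      simp
    rw [e1, e2]
    apply List.countP_congr
    intro i hi
    simp only [decide_eq_true_eq]
    constructor
    · intro h
      obtain ⟨t, ht⟩ := h
      refine ⟨t, ?_⟩
      rw [drop_succ', ← ht]
      simp
    · intro h
      obtain ⟨h1, h2, h3⟩ := hprec (i+1) h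
      simpa using h2
  · rintro ⟨b, c, hbc, hinfb, hinfc⟩
    have key : ∀ d, (X ++ [d]) <:+: s → ((a :: X) ++ [d]) <:+: s := by
      intro d hinf
      obtain ⟨j, _, hj⟩ := infix_occur hinf
      have hjX : X <+: s.drop j := (X.prefix_append [d]).trans hj
      obtain ⟨h1, h2, h3⟩ := hprec j hjX
      have hfin : ((a :: X) ++ [d]) <+: s.drop (j - 1) := by
        rw [h3]
        simpa using prefix_cons2 (a := a) hj
      exact occur_infix hfin
    exact ⟨b, c, hbc, key b hinfb, key c hinfc⟩

/-- Left extension: recursion. -/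
lemma extend_left (hsh : ∃ y, s = hash :: y) (hcnt : s.count hash ≤ 1) :
    ∀ (k : ℕ) (X : List α), s.length - X.length ≤ k → X ≠ [] →
      2 ≤ occ s X → rightMax s X →
      ∃ U, leftMax s (U ++ X) ∧ rightMax s (U ++ X) ∧ occ s (U ++ X) = occ s X := by
  intro k
  induction k with
  | zero =>
    intro X hk hX hocc hrm
    by_cases hlm : leftMax s X
    · exact ⟨[], by simpa using hlm, by simpa using hrm, by simp⟩
    · obtain ⟨a, heq, hrm'⟩ := step_left hsh hcnt hX hocc hlm
      -- need length bound: a :: X occurs so |X| < |s|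
      have h2 : 2 ≤ occ s (a :: X) := by rw [heq]; exact hocc
      obtain ⟨i, hai⟩ := exists_occur_of_two_le h2
      have := hai.length_le
      simp at this
      omega
  | succ k ih =>
    intro X hk hX hocc hrm
    by_cases hlm : leftMax s X
    · exact ⟨[], by simpa using hlm, by simpa using hrm, by simp⟩
    · obtain ⟨a, heq, hrmp⟩ := step_left hsh hcnt hX hocc hlm
      have h2 : 2 ≤ occ s (a :: X) := by rw [heq]; exact hocc
      obtain ⟨i, hai⟩ := exists_occur_of_two_le h2
      have hlena : (a :: X).length ≤ s.length := by
        have := hai.length_le; simp at this ⊢; omega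
      obtain ⟨U', hlm', hrm', heq'⟩ := ih (a :: X) (by simp at hlena ⊢; omega)
        (by simp) h2 (hrmp hrm)
      refine ⟨U' ++ [a], ?_, ?_, ?_⟩
      · have h3 : (U' ++ [a]) ++ X = U' ++ (a :: X) := by simp
        rw [h3]; exact hlm'
      · have h3 : (U' ++ [a]) ++ X = U' ++ (a :: X) := by simp
        rw [h3]; exact hrm'
      · have h3 : (U' ++ [a]) ++ X = U' ++ (a :: X) := by simp
        rw [h3, heq', heq]

end Main


/-- with `T' = # · T · $`, every nonempty `W` over `Σ` occurring
at least twice in `T'` extends to a maximal repeat `UWV` with the same number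
of occurrences. -/
theorem extend_to_maximal_repeat {α : Type*} [DecidableEq α]
    (T W : List α) (hash dol : α)
    (hh : hash ∉ T) (hd : dol ∉ T) (hhd : hash ≠ dol)
    (hW : W ≠ []) (hWsig : ∀ x ∈ W, x ≠ hash ∧ x ≠ dol)
    (hocc : 2 ≤ occ (hash :: T ++ [dol]) W) :
    ∃ U V : List α,
      leftMax (hash :: T ++ [dol]) (U ++ W ++ V) ∧
      rightMax (hash :: T ++ [dol]) (U ++ W ++ V) ∧
      occ (hash :: T ++ [dol]) (U ++ W ++ V) = occ (hash :: T ++ [dol]) W := by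
  have hsd : ∃ y, hash :: T ++ [dol] = y ++ [dol] := ⟨hash :: T, by simp⟩
  have hsh : ∃ y, hash :: T ++ [dol] = hash :: y := ⟨T ++ [dol], rfl⟩
  have hcd : (hash :: T ++ [dol]).count dol ≤ 1 := by
    simp [List.count_cons, List.count_append, List.count_eq_zero.mpr hd, hhd]
  have hch : (hash :: T ++ [dol]).count hash ≤ 1 := by
    simp [List.count_cons, List.count_append, List.count_eq_zero.mpr hh, hhd, hhd.symm]
  obtain ⟨V, hrm, heqV⟩ := extend_right hsd hcd (hash :: T ++ [dol]).length W
    (by omega) hW hocc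
  have hWV : W ++ V ≠ [] := by
    cases W with | nil => exact absurd rfl hW | cons x xs => simp
  obtain ⟨U, hlm, hrm', heqU⟩ := extend_left hsh hch (hash :: T ++ [dol]).length
    (W ++ V) (by omega) hWV (by rw [heqV]; exact hocc) hrm
  refine ⟨U, V, ?_, ?_, ?_⟩
  · rw [List.append_assoc]; exact hlm
  · rw [List.append_assoc]; exact hrm'
  · rw [List.append_assoc, heqU, heqV]
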